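/- arXiv:math/0510675 — 4 statements merged into one kernel-verified Lean document; each statement's English description precedes it below -/
import Mathlib

section
/- Let A be a reduced commutative ring with only finitely many pairwise distinct minimal prime ideals p₁, …, pₙ, and let S be the set of non zero divisors of A. Then the ideals S⁻¹p₁, …, S⁻¹pₙ of the total quotient ring Quot(A) = S⁻¹A are pairwise distinct maximal ideals, every prime ideal of S⁻¹A equals S⁻¹pᵢ for some i, and S⁻¹p₁ ∩ … ∩ S⁻¹pₙ = 0. -/
/-- In any commutative ring, a minimal prime consists of zero divisors. -/
theorem aux_minimal_disjoint_nzd {A : Type*} [CommRing A] {P : Ideal A}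
    (hP : P ∈ minimalPrimes A) : Disjoint (P : Set A) (nonZeroDivisors A : Set A) := by
  have hprime : P.IsPrime := hP.1.1
  rw [Set.disjoint_left]
  intro x hxP hxS
  set T := Submonoid.closure (insert x ((P : Set A)ᶜ)) with hT
  have hrep : ∀ z ∈ T, ∃ k : ℕ, ∃ s, s ∉ P ∧ z = x ^ k * s := by
    intro z hz
    induction hz using Submonoid.closure_induction with
    | mem z hz =>
      rcases hz with rfl | hz
      · exact ⟨1, 1, fun h => hprime.ne_top (P.eq_top_iff_one.2 h), by ring⟩
      · exact ⟨0, z, hz, by ring⟩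
    | one => exact ⟨0, 1, fun h => hprime.ne_top (P.eq_top_iff_one.2 h), by ring⟩
    | mul a b _ _ iha ihb =>
      obtain ⟨k, s, hs, rfl⟩ := iha
      obtain ⟨l, t, ht, rfl⟩ := ihb
      refine ⟨k + l, s * t, fun h => ?_, by ring⟩
      rcases hprime.mem_or_mem h with h | h
      · exact hs h
      · exact ht h
  have hdisj : Disjoint ((⊥ : Ideal A) : Set A) (T : Set A) := by
    rw [Set.disjoint_left]
    rintro z hz hzT
    have hz0 : z = 0 := hz
    obtain ⟨k, s, hs, hzs⟩ := hrep z hzT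
    have hxk : (x ^ k) ∈ nonZeroDivisors A := pow_mem hxS k
    have : s = 0 := by
      have := (mem_nonZeroDivisors_iff.mp hxk).2 s (by rw [mul_comm]; rw [hz0] at hzs; exact hzs.symm)
      exact this
    exact hs (this ▸ P.zero_mem)
  obtain ⟨q, hq, -, hqT⟩ := Ideal.exists_le_prime_disjoint ⊥ T hdisj
  have hqP : q ≤ P := by
    intro y hy
    by_contra hyP
    exact Set.disjoint_left.mp hqT hy (Submonoid.subset_closure (Set.mem_insert_of_mem _ hyP))
  have hPq : P ≤ q := hP.2 ⟨hq, bot_le⟩ hqP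
  exact Set.disjoint_left.mp hqT (hPq hxP) (Submonoid.subset_closure (Set.mem_insert _ _))

/-- Let `A` be a reduced commutative ring whose minimal primes are exactly the
pairwise distinct `p 1, …, p n`, and let `S` be the set of non zero divisors of
`A`.  Then the extensions `S⁻¹p i` to the total quotient ring `S⁻¹A` are
pairwise distinct maximal ideals, every prime ideal of `S⁻¹A` is one of them,
and their intersection is zero. -/
theorem stmt_2 {A : Type*} [CommRing A] [IsReduced A] {n : ℕ} (p : Fin n → Ideal A)
    (hinj : Function.Injective p)
    (hmin : ∀ i, p i ∈ minimalPrimes A)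
    (hall : ∀ q ∈ minimalPrimes A, ∃ i, q = p i) :
    Function.Injective (fun i =>
        (p i).map (algebraMap A (Localization (nonZeroDivisors A)))) ∧
    (∀ i, ((p i).map (algebraMap A (Localization (nonZeroDivisors A)))).IsMaximal) ∧
    (∀ q : Ideal (Localization (nonZeroDivisors A)), q.IsPrime →
        ∃ i, q = (p i).map (algebraMap A (Localization (nonZeroDivisors A)))) ∧
    (⨅ i, (p i).map (algebraMap A (Localization (nonZeroDivisors A)))) = ⊥ := by
  set L := Localization (nonZeroDivisors A) with hL
  set S := nonZeroDivisors A with hS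
  set f := algebraMap A L with hf
  have hprime : ∀ i, (p i).IsPrime := fun i => (hmin i).1.1
  have hdisj : ∀ i, Disjoint (S : Set A) ((p i : Ideal A) : Set A) :=
    fun i => (aux_minimal_disjoint_nzd (hmin i)).symm
  have hcm : ∀ i, ((p i).map f).comap f = p i := fun i =>
    IsLocalization.comap_map_of_isPrime_disjoint S L (hprime i) (hdisj i)
  have hmapprime : ∀ i, ((p i).map f).IsPrime := fun i =>
    IsLocalization.isPrime_of_isPrime_disjoint S L (p i) (hprime i) (hdisj i)
  -- the infimum of the minimal primes is zero
  have hinf : (⨅ i, p i) = ⊥ := by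
    have h1 : (⨅ i, p i) ≤ sInf {J : Ideal A | J.IsPrime} := by
      refine le_sInf fun J hJ => ?_
      haveI : J.IsPrime := hJ
      obtain ⟨q, hq, hqJ⟩ := Ideal.exists_minimalPrimes_le (bot_le : (⊥ : Ideal A) ≤ J)
      obtain ⟨i, rfl⟩ := hall q hq
      exact (iInf_le _ i).trans hqJ
    rw [← nilradical_eq_sInf, nilradical_eq_zero] at h1
    exact le_bot_iff.mp h1
  -- classification of primes of L
  have hclass : ∀ q : Ideal L, q.IsPrime → ∃ i, q = (p i).map f := by
    intro q hq
    obtain ⟨hq', hqd⟩ := (IsLocalization.isPrime_iff_isPrime_disjoint S L q).mp hq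
    set q' := q.comap f with hq'def
    -- A is nontrivial since L has a prime ideal
    have : Nontrivial L := ⟨1, 0, fun h => hq.ne_top (q.eq_top_iff_one.2 (h ▸ q.zero_mem))⟩
    have hAnt : Nontrivial A := by
      by_contra h
      rw [not_nontrivial_iff_subsingleton] at h
      exact (not_subsingleton L) (Module.subsingleton A L)
    have hn : Nonempty (Fin n) := by
      rcases Nat.eq_zero_or_pos n with rfl | hn
      · exfalso
        have : (⊤ : Ideal A) = ⊥ := by rw [← hinf, iInf_of_empty]
        exact top_ne_bot this
      · exact ⟨⟨0, hn⟩⟩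
    obtain ⟨i₀⟩ := hn
    -- q' is contained in the union of the p i
    have hsub : (q' : Set A) ⊆ ⋃ i ∈ ((Finset.univ : Finset (Fin n)) : Set (Fin n)), ((p i : Ideal A) : Set A) := by
      intro x hx
      have hxS : x ∉ S := fun hxS => Set.disjoint_left.mp hqd hxS hx
      rw [hS, mem_nonZeroDivisors_iff_right] at hxS
      push_neg at hxS
      obtain ⟨y, hxy, hy0⟩ := hxS
      have hy : ∃ i, y ∉ p i := by
        by_contra h
        push_neg at h
        exact hy0 (by simpa [hinf] using Ideal.mem_iInf.mpr h : y ∈ (⊥ : Ideal A))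
      obtain ⟨i, hyi⟩ := hy
      have hxi : x ∈ p i := by
        rcases (hprime i).mem_or_mem (show y * x ∈ p i from hxy ▸ (p i).zero_mem) with h | h
        · exact absurd h hyi
        · exact h
      exact Set.mem_biUnion (Finset.mem_coe.mpr (Finset.mem_univ i)) hxi
    obtain ⟨i, -, hle⟩ := (Ideal.subset_union_prime i₀ i₀
      (fun i _ _ _ => hprime i)).mp hsub
    -- q' contains a minimal prime
    haveI : q'.IsPrime := hq'
    obtain ⟨P, hP, hPq⟩ := Ideal.exists_minimalPrimes_le (bot_le : (⊥ : Ideal A) ≤ q')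
    obtain ⟨j, rfl⟩ := hall P hP
    have hji : p j ≤ p i := hPq.trans hle
    have hij : p i ≤ p j := (hmin i).2 ⟨hprime j, bot_le⟩ hji
    have hq'i : q' = p i := le_antisymm hle (hij.trans hPq)
    refine ⟨i, ?_⟩
    rw [← IsLocalization.map_comap S L q, show Ideal.under A q = q' from rfl, hq'i]
  -- injectivity
  have hinj' : Function.Injective (fun i => (p i).map f) := by
    intro i j h
    apply hinj
    rw [← hcm i, ← hcm j]
    simp only at h
    rw [h]
  -- maximality
  have hmax : ∀ i, ((p i).map f).IsMaximal := by
    intro i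
    obtain ⟨m, hm, hle⟩ := Ideal.exists_le_maximal _ (hmapprime i).ne_top
    obtain ⟨j, rfl⟩ := hclass m hm.isPrime
    have hij : p i ≤ p j := by
      rw [← hcm i, ← hcm j]; exact Ideal.comap_mono hle
    have hji : p j ≤ p i := (hmin j).2 ⟨hprime i, bot_le⟩ hij
    rw [hinj (le_antisymm hij hji)]
    exact hm
  -- the infimum of the extensions is zero
  have hbot : (⨅ i, (p i).map f) = ⊥ := by
    have hc : Ideal.comap f (⨅ i, (p i).map f) = ⨅ i, p i := by
      ext x
      simp only [Ideal.mem_comap, Ideal.mem_iInf]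
      constructor
      · intro h i
        rw [← hcm i]; exact h i
      · intro h i
        exact Ideal.mem_map_of_mem f (h i)
    conv_lhs => rw [← IsLocalization.map_comap S L (⨅ i, (p i).map f)]
    rw [show Ideal.under A (⨅ i, (p i).map f) = Ideal.comap f (⨅ i, (p i).map f) from rfl, hc, hinf, Ideal.map_bot]
  exact ⟨hinj', hmax, hclass, hbot⟩
end

section
/- Let A be a reduced commutative ring with only finitely many pairwise distinct minimal prime ideals p₁, …, pₙ, and let S be the set of non zero divisors of A. Then for each i ∈ {1, …, n} there is a canonical ring isomorphism S⁻¹A / S⁻¹pᵢ ≅ qf(A/pᵢ), where qf(A/pᵢ) denotes the quotient field (field of fractions) of the integral domain A/pᵢ. -/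
section aux
variable {A : Type*} [CommRing A] [IsReduced A]

lemma aux_sInf : sInf (minimalPrimes A) = (⊥ : Ideal A) := by
  have := Ideal.sInf_minimalPrimes (I := (⊥ : Ideal A))
  rw [show Ideal.radical ⊥ = nilradical A from rfl, nilradical_eq_zero] at this; exact this

lemma aux_nzd {t : A} (ht : ∀ q ∈ minimalPrimes A, t ∉ q) : t ∈ nonZeroDivisors A := by
  rw [mem_nonZeroDivisors_iff_right]
  intro x hx
  by_contra hx0
  have : x ∉ sInf (minimalPrimes A) := by rw [aux_sInf]; simpa using hx0
  obtain ⟨q, hq, hxq⟩ : ∃ q ∈ minimalPrimes A, x ∉ q := by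
    simpa only [Ideal.mem_sInf, not_forall, exists_prop] using this
  have hq' : q.IsPrime := hq.1.1
  have : x * t ∈ q := by rw [hx]; exact q.zero_mem
  rcases hq'.mem_or_mem this with h | h
  · exact hxq h
  · exact ht q hq h

lemma aux_nzd_notmem {s : A} (hs : s ∈ nonZeroDivisors A) {q : Ideal A}
    (hq : q ∈ minimalPrimes A) : s ∉ q := by
  intro hsq
  have hq' : q.IsPrime := hq.1.1
  have h1 : algebraMap A (Localization q.primeCompl) s ∈
      IsLocalRing.maximalIdeal (Localization q.primeCompl) :=
    (IsLocalization.AtPrime.to_map_mem_maximal_iff _ q s).mpr hsq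
  have h2 : IsNilpotent (algebraMap A (Localization q.primeCompl) s) :=
    by
      have h4 := IsLocalization.AtPrime.radical_map_of_mem_minimalPrimes
        (A := Localization q.primeCompl) q ⊥ hq
      rw [Ideal.map_bot, IsLocalization.AtPrime.map_eq_maximalIdeal] at h4
      have h3 : algebraMap A (Localization q.primeCompl) s ∈ (⊥ : Ideal _).radical := h4 ▸ h1
      obtain ⟨k, hk⟩ := h3
      exact ⟨k, by simpa using hk⟩
  obtain ⟨k, hk⟩ := h2
  rw [← map_pow, ← map_zero (algebraMap A (Localization q.primeCompl))] at hk
  obtain ⟨c, hc⟩ := (IsLocalization.eq_iff_exists q.primeCompl _).mp hk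
  simp only [mul_zero] at hc
  have : (c : A) = 0 := (mem_nonZeroDivisors_iff_right.mp (pow_mem hs k)) c hc
  exact c.2 (this ▸ q.zero_mem)

end aux

/-- Let `A` be a reduced commutative ring whose minimal primes are exactly the
pairwise distinct `p 1, …, p n`, and let `S` be the set of non zero divisors of
`A`.  Then for each `i` there is a canonical ring isomorphism
`S⁻¹A / S⁻¹(p i) ≅ qf(A / p i)`, compatible with the natural maps from `A`. -/
theorem stmt_3 {A : Type*} [CommRing A] [IsReduced A] {n : ℕ} (p : Fin n → Ideal A)
    (hinj : Function.Injective p)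
    (hmin : ∀ i, p i ∈ minimalPrimes A)
    (hall : ∀ q ∈ minimalPrimes A, ∃ i, q = p i) :
    ∀ i, ∃ e : (Localization (nonZeroDivisors A) ⧸
          (p i).map (algebraMap A (Localization (nonZeroDivisors A)))) ≃+*
          FractionRing (A ⧸ p i),
      ∀ a : A,
        e (Ideal.Quotient.mk _ (algebraMap A (Localization (nonZeroDivisors A)) a)) =
          algebraMap (A ⧸ p i) (FractionRing (A ⧸ p i)) (Ideal.Quotient.mk (p i) a) := by
  intro i
  haveI hPprime : (p i).IsPrime := (hmin i).1.1
  set K := Localization (nonZeroDivisors A) with hK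
  set F := FractionRing (A ⧸ p i) with hF
  set g : A →+* F := (algebraMap (A ⧸ p i) F).comp (Ideal.Quotient.mk (p i)) with hgdef
  have hFinj : Function.Injective (algebraMap (A ⧸ p i) F) := IsFractionRing.injective _ _
  have hg : ∀ s : nonZeroDivisors A, IsUnit (g s) := by
    intro s
    have hs : (Ideal.Quotient.mk (p i) (s : A)) ≠ 0 := by
      rw [Ne, Ideal.Quotient.eq_zero_iff_mem]
      exact aux_nzd_notmem s.2 (hmin i)
    exact IsLocalization.map_units F ⟨_, mem_nonZeroDivisors_of_ne_zero hs⟩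
  set φ : K →+* F := IsLocalization.lift hg with hφdef
  have hφ : ∀ a : A, φ (algebraMap A K a) = g a := fun a => IsLocalization.lift_eq hg a
  -- kernel containments
  have hker1 : ∀ a ∈ p i, φ (algebraMap A K a) = 0 := by
    intro a ha
    rw [hφ, hgdef]
    simp [Ideal.Quotient.eq_zero_iff_mem.mpr ha]
  have hker1' : (p i).map (algebraMap A K) ≤ RingHom.ker φ := by
    rw [Ideal.map_le_iff_le_comap]
    intro a ha
    simpa [RingHom.mem_ker] using hker1 a ha
  have hker2 : RingHom.ker φ ≤ (p i).map (algebraMap A K) := by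
    intro x hx
    rw [RingHom.mem_ker] at hx
    obtain ⟨⟨a, s⟩, rfl⟩ := IsLocalization.mk'_surjective (nonZeroDivisors A) x
    have hga : g a = 0 := by
      have := (IsLocalization.lift_mk'_spec (g := g) (hg := hg) a (0 : F) s).mp hx
      simpa using this
    have haP : a ∈ p i := by
      rw [hgdef] at hga
      simp only [RingHom.comp_apply] at hga
      rw [← map_zero (algebraMap (A ⧸ p i) F)] at hga
      rw [← Ideal.Quotient.eq_zero_iff_mem]
      exact hFinj hga
    show IsLocalization.mk' K a s ∈ _
    rw [IsLocalization.mk'_eq_mul_mk'_one]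
    exact Ideal.mul_mem_right _ _ (Ideal.mem_map_of_mem _ haP)
  -- pick e ∈ ⋂_{j ≠ i} p j, e ∉ p i
  have hminle : ∀ j, p j ≤ p i → j = i := by
    intro j hle
    have : p i ≤ p j := (hmin i).2 ⟨(hmin j).1.1, bot_le⟩ hle
    exact hinj (le_antisymm hle this)
  obtain ⟨e, heProd, heP⟩ :
      ∃ e ∈ ∏ j ∈ Finset.univ.erase i, p j, e ∉ p i := by
    by_contra h
    push_neg at h
    have hle : (∏ j ∈ Finset.univ.erase i, p j) ≤ p i := h
    obtain ⟨j, hj, hle'⟩ := hPprime.prod_le.mp hle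
    exact (Finset.mem_erase.mp hj).1 (hminle j hle')
  have he_mem : ∀ j, j ≠ i → e ∈ p j := by
    intro j hj
    exact (Ideal.prod_le_inf.trans (Finset.inf_le (Finset.mem_erase.mpr ⟨hj, Finset.mem_univ j⟩)))
      heProd
  -- pick f ∈ p i, f ∉ p j for j ≠ i
  obtain ⟨f, hfP, hf⟩ :
      ∃ f ∈ p i, ∀ j, j ≠ i → f ∉ p j := by
    have hns : ¬ ((p i : Set A) ⊆ ⋃ j ∈ (↑(Finset.univ.erase i) : Set (Fin n)), ↑(p j)) := by
      rw [Ideal.subset_union_prime i i (fun j hj _ _ => (hmin j).1.1)]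
      rintro ⟨j, hj, hle⟩
      have : p i = p j := by
        have h1 : p j ≤ p i := (hmin j).2 ⟨(hmin i).1.1, bot_le⟩ hle
        exact le_antisymm hle h1
      exact (Finset.mem_erase.mp hj).1 (hinj this.symm)
    obtain ⟨f, hfP, hf⟩ := Set.not_subset.mp hns
    refine ⟨f, hfP, fun j hj hmem => hf ?_⟩
    exact Set.mem_biUnion (by simp [Finset.mem_erase, hj]) hmem
  -- surjectivity of φ
  have hsurj : Function.Surjective φ := by
    intro y
    obtain ⟨α, β, hβ, hy⟩ := IsFractionRing.div_surjective (A := A ⧸ p i) y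
    obtain ⟨a, rfl⟩ := Ideal.Quotient.mk_surjective α
    obtain ⟨b, rfl⟩ := Ideal.Quotient.mk_surjective β
    have hbP : b ∉ p i := by
      intro hb
      exact nonZeroDivisors.ne_zero hβ (Ideal.Quotient.eq_zero_iff_mem.mpr hb)
    set t : A := b * e + f with htdef
    have ht : t ∈ nonZeroDivisors A := by
      apply aux_nzd
      intro q hq htq
      obtain ⟨j, rfl⟩ := hall q hq
      by_cases hji : j = i
      · subst hji
        have : b * e ∈ p j := by
          have := (p j).sub_mem htq hfP
          simpa [htdef] using this
        rcases hPprime.mem_or_mem this with h | h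
        · exact hbP h
        · exact heP h
      · have hbe : b * e ∈ p j := Ideal.mul_mem_left _ _ (he_mem j hji)
        have : f ∈ p j := by
          have := (p j).sub_mem htq hbe
          simpa [htdef] using this
        exact hf j hji this
    refine ⟨IsLocalization.mk' K (a * e) ⟨t, ht⟩, ?_⟩
    rw [IsLocalization.lift_mk'_spec]
    -- goal : g (a * e) = g t * y
    have hgf : g f = 0 := by
      simp [hgdef, Ideal.Quotient.eq_zero_iff_mem.mpr hfP]
    have hgt : g t = g b * g e := by
      rw [htdef]
      simp [map_add, map_mul, hgf]
    have hgb : g b ≠ 0 := by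
      simp only [hgdef, RingHom.comp_apply]
      rw [← map_zero (algebraMap (A ⧸ p i) F), Ne]
      intro h
      exact hbP (Ideal.Quotient.eq_zero_iff_mem.mp (hFinj h))
    have hyb : y * g b = algebraMap (A ⧸ p i) F (Ideal.Quotient.mk (p i) a) := by
      rw [← hy, hgdef]
      simp only [RingHom.comp_apply]
      exact div_mul_cancel₀ _ hgb
    rw [hgt]
    have : g (a * e) = (y * g b) * g e := by
      rw [hyb, hgdef]; simp [map_mul]
    rw [this]; ring
  set ψ := Ideal.Quotient.lift ((p i).map (algebraMap A K)) φ
    (fun a ha => by simpa [RingHom.mem_ker] using hker1' ha) with hψdef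
  have hinjψ : Function.Injective ψ :=
    RingHom.lift_injective_of_ker_le_ideal _ _ hker2
  have hsurjψ : Function.Surjective ψ := by
    intro y
    obtain ⟨x, hx⟩ := hsurj y
    exact ⟨Ideal.Quotient.mk _ x, by simpa [hψdef] using hx⟩
  refine ⟨RingEquiv.ofBijective ψ ⟨hinjψ, hsurjψ⟩, fun a => ?_⟩
  simp only [RingEquiv.coe_ofBijective, hψdef, Ideal.Quotient.lift_mk]
  exact hφ a
end

section
/- Let A be a reduced commutative ring with only finitely many pairwise distinct minimal prime ideals p₁, …, pₙ. Then there is a canonical ring isomorphism Quot(A) ≅ qf(A/p₁) × ⋯ × qf(A/pₙ), whose i-th component is induced by the natural maps A → A/pᵢ → qf(A/pᵢ). -/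
open scoped nonZeroDivisors

section Aux
variable {A : Type*} [CommRing A] [IsReduced A]

lemma aux_notMem_of_nzd {q : Ideal A} (hq : q ∈ minimalPrimes A) {s : A}
    (hs : s ∈ nonZeroDivisors A) : s ∉ q := by
  intro hsq
  haveI : q.IsPrime := hq.1.1
  have h0 : algebraMap A (Localization q.primeCompl) s = 0 := by
    have hnil : IsNilpotent (algebraMap A (Localization q.primeCompl) s) := by
      haveI : Ring.KrullDimLE 0 (Localization.AtPrime q) := .of_isLocalization _ hq _
      rw [Ring.KrullDimLE.isNilpotent_iff_mem_maximalIdeal]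
      exact (IsLocalization.AtPrime.to_map_mem_maximal_iff _ q s).mpr hsq
    exact hnil.eq_zero
  rw [IsLocalization.map_eq_zero_iff q.primeCompl] at h0
  obtain ⟨⟨t, ht⟩, hts⟩ := h0
  exact ht ((hs.2 t hts) ▸ q.zero_mem)

lemma aux_eq_zero {n : ℕ} {p : Fin n → Ideal A}
    (hall : ∀ q ∈ minimalPrimes A, ∃ i, q = p i) {x : A} (h : ∀ i, x ∈ p i) :
    x = 0 := by
  have hx0 : x ∈ sInf (minimalPrimes A) := by
    rw [Ideal.mem_sInf]
    rintro q hq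
    obtain ⟨i, rfl⟩ := hall q hq
    exact h i
  have hs : sInf (minimalPrimes A) = ⊥ :=
    (Ideal.sInf_minimalPrimes (I := (⊥ : Ideal A))).trans (nilradical_eq_zero A)
  rw [hs] at hx0
  simpa using hx0

lemma aux_mem_nzd {n : ℕ} {p : Fin n → Ideal A}
    (hmin : ∀ i, p i ∈ minimalPrimes A)
    (hall : ∀ q ∈ minimalPrimes A, ∃ i, q = p i) {s : A} (h : ∀ i, s ∉ p i) :
    s ∈ nonZeroDivisors A := by
  refine mem_nonZeroDivisors_iff_right.mpr fun x hx => ?_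
  refine aux_eq_zero hall fun i => ?_
  haveI : (p i).IsPrime := (hmin i).1.1
  have : x * s ∈ p i := by rw [hx]; exact (p i).zero_mem
  exact (Ideal.IsPrime.mem_or_mem ‹_› this).resolve_right (h i)

end Aux

/-- Let `A` be a reduced commutative ring whose minimal primes are exactly the
pairwise distinct `p 1, …, p n`.  Then there is a canonical ring isomorphism
`Quot(A) ≅ qf(A/p 1) × ⋯ × qf(A/p n)` whose `i`-th component is induced by the
natural maps `A → A/p i → qf(A/p i)`. -/
theorem stmt_4 {A : Type*} [CommRing A] [IsReduced A] {n : ℕ} (p : Fin n → Ideal A)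
    (hinj : Function.Injective p)
    (hmin : ∀ i, p i ∈ minimalPrimes A)
    (hall : ∀ q ∈ minimalPrimes A, ∃ i, q = p i) :
    ∃ e : Localization (nonZeroDivisors A) ≃+* (∀ i, FractionRing (A ⧸ p i)),
      ∀ (a : A) (i : Fin n),
        e (algebraMap A (Localization (nonZeroDivisors A)) a) i =
          algebraMap (A ⧸ p i) (FractionRing (A ⧸ p i)) (Ideal.Quotient.mk (p i) a) := by
  classical
  have hP : ∀ i, (p i).IsPrime := fun i => (hmin i).1.1
  set φ : A →+* ∀ i, FractionRing (A ⧸ p i) :=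
    Pi.ringHom fun i => (algebraMap (A ⧸ p i) (FractionRing (A ⧸ p i))).comp
      (Ideal.Quotient.mk (p i)) with hφdef
  have hφa : ∀ (a : A) (i : Fin n),
      φ a i = algebraMap (A ⧸ p i) (FractionRing (A ⧸ p i)) (Ideal.Quotient.mk (p i) a) :=
    fun a i => rfl
  have hne : ∀ {s : A} (i : Fin n), s ∉ p i → φ s i ≠ 0 := by
    intro s i hs
    haveI := hP i
    rw [hφa, Ne, IsFractionRing.to_map_eq_zero_iff, Ideal.Quotient.eq_zero_iff_mem]
    exact hs
  have hunits : ∀ s : nonZeroDivisors A, IsUnit (φ s) := by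
    intro s
    refine IsUnit.of_mul_eq_one (fun i => (φ s i)⁻¹) (funext fun i => ?_)
    haveI := hP i
    exact mul_inv_cancel₀ (hne i (aux_notMem_of_nzd (hmin i) s.2))
  set ψ : Localization (nonZeroDivisors A) →+* ∀ i, FractionRing (A ⧸ p i) :=
    IsLocalization.lift hunits with hψdef
  have hψalg : ∀ a : A, ψ (algebraMap A (Localization (nonZeroDivisors A)) a) = φ a :=
    fun a => IsLocalization.lift_eq hunits a
  have hinj' : Function.Injective ψ := by
    rw [injective_iff_map_eq_zero]
    intro x hx
    obtain ⟨⟨a, s⟩, rfl⟩ := IsLocalization.mk'_surjective (nonZeroDivisors A) x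
    have h1 : φ a = 0 := by
      calc φ a = ψ (algebraMap A _ a) := (hψalg a).symm
        _ = ψ (IsLocalization.mk' _ a s * algebraMap A _ (s : A)) := by
            rw [IsLocalization.mk'_spec]
        _ = 0 := by rw [map_mul, hx, zero_mul]
    have h2 : a = 0 := by
      refine aux_eq_zero hall fun i => ?_
      haveI := hP i
      have hzi := congrFun h1 i
      rw [hφa, Pi.zero_apply, IsFractionRing.to_map_eq_zero_iff,
        Ideal.Quotient.eq_zero_iff_mem] at hzi
      exact hzi
    rw [h2]
    exact IsLocalization.mk'_zero _
  have hsurj : Function.Surjective ψ := by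
    intro v
    -- choose elements c i in all p j (j ≠ i) but not in p i
    have hc : ∀ i, ∃ c : A, c ∉ p i ∧ ∀ j, j ≠ i → c ∈ p j := by
      intro i
      have hd : ∀ j, ∃ d : A, (j ≠ i → d ∈ p j) ∧ d ∉ p i := by
        intro j
        by_cases hj : j = i
        · exact ⟨1, fun h => absurd hj h, (hP i).1 ∘ (Ideal.eq_top_iff_one _).mpr⟩
        · by_contra hcon
          push_neg at hcon
          have hle : p j ≤ p i := fun d hd => hcon d fun _ => hd
          have hge := (hmin i).2 ⟨hP j, bot_le⟩ hle
          exact hj (hinj (le_antisymm hle hge))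
      choose d hd1 hd2 using hd
      refine ⟨∏ j ∈ Finset.univ.erase i, d j, ?_, ?_⟩
      · intro hmem
        haveI := hP i
        obtain ⟨j, hj, hj'⟩ := (Ideal.IsPrime.prod_mem_iff).mp hmem
        exact hd2 j hj'
      · intro j hj
        obtain ⟨k, hk⟩ := Finset.dvd_prod_of_mem d (Finset.mem_erase.mpr ⟨hj, Finset.mem_univ j⟩)
        rw [hk]
        exact Ideal.mul_mem_right _ _ (hd1 j hj)
    choose c hc1 hc2 using hc
    -- lift the components of v
    have hv : ∀ i, ∃ a b : A, Ideal.Quotient.mk (p i) b ≠ 0 ∧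
        algebraMap (A ⧸ p i) (FractionRing (A ⧸ p i)) (Ideal.Quotient.mk (p i) a) /
          algebraMap (A ⧸ p i) (FractionRing (A ⧸ p i)) (Ideal.Quotient.mk (p i) b) = v i := by
      intro i
      haveI := hP i
      obtain ⟨x, y, hy, hxy⟩ := IsFractionRing.div_surjective (A := A ⧸ p i) (v i)
      obtain ⟨a, rfl⟩ := Ideal.Quotient.mk_surjective x
      obtain ⟨b, rfl⟩ := Ideal.Quotient.mk_surjective y
      exact ⟨a, b, nonZeroDivisors.ne_zero hy, hxy⟩
    choose a b hb hab using hv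
    set S : A := ∑ j, c j * b j with hSdef
    set T : A := ∑ j, c j * a j with hTdef
    have hmk : ∀ (f : Fin n → A) (i : Fin n),
        Ideal.Quotient.mk (p i) (∑ j, c j * f j) =
          Ideal.Quotient.mk (p i) (c i) * Ideal.Quotient.mk (p i) (f i) := by
      intro f i
      rw [map_sum]
      rw [Finset.sum_eq_single_of_mem i (Finset.mem_univ i)]
      · rw [map_mul]
      · intro j _ hji
        rw [map_mul]
        have : Ideal.Quotient.mk (p i) (c j) = 0 :=
          Ideal.Quotient.eq_zero_iff_mem.mpr (hc2 j i (Ne.symm hji))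
        rw [this, zero_mul]
    have hSne : ∀ i, Ideal.Quotient.mk (p i) S ≠ 0 := by
      intro i
      haveI := hP i
      rw [hSdef, hmk b i]
      exact mul_ne_zero (fun h => hc1 i (Ideal.Quotient.eq_zero_iff_mem.mp h)) (hb i)
    have hS0 : S ∈ nonZeroDivisors A :=
      aux_mem_nzd hmin hall fun i h =>
        hSne i (Ideal.Quotient.eq_zero_iff_mem.mpr h)
    refine ⟨IsLocalization.mk' (Localization (nonZeroDivisors A)) T ⟨S, hS0⟩, funext fun i => ?_⟩
    haveI := hP i
    have hspec : ψ (IsLocalization.mk' (Localization (nonZeroDivisors A)) T ⟨S, hS0⟩) * φ S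
        = φ T := by
      rw [← hψalg S, ← map_mul, IsLocalization.mk'_spec, hψalg]
    have hi := congrFun hspec i
    have hSi : φ S i ≠ 0 := hne i fun h => hSne i (Ideal.Quotient.eq_zero_iff_mem.mpr h)
    have hv' : v i * φ S i = φ T i := by
      rw [← hab i, hφa, hφa, hSdef, hTdef, hmk b i, hmk a i, map_mul, map_mul]
      have hbne : algebraMap (A ⧸ p i) (FractionRing (A ⧸ p i))
          (Ideal.Quotient.mk (p i) (b i)) ≠ 0 := by
        rw [Ne, IsFractionRing.to_map_eq_zero_iff]
        exact hb i
      field_simp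
    exact mul_right_cancel₀ hSi (hi.trans hv'.symm)
  refine ⟨RingEquiv.ofBijective ψ ⟨hinj', hsurj⟩, fun x i => ?_⟩
  show ψ (algebraMap A _ x) i = _
  rw [hψalg]
  exact hφa x i
end

section
/- Let A be a reduced commutative ring with only finitely many pairwise distinct minimal prime ideals p₁, …, pₙ, and let B be a subring of A such that: (1) for each i, the canonical embedding of fields qf(B/(pᵢ ∩ B)) → qf(A/pᵢ) induced by the inclusion B/(pᵢ ∩ B) ⊆ A/pᵢ is surjective (hence an isomorphism); (2) pᵢ ∩ B ⊄ pⱼ ∩ B for all i ≠ j; and (3) every minimal prime ideal of B is of the form pᵢ ∩ B for some i. Then every non zero divisor of B is a non zero divisor of A, and the induced canonical ring homomorphism Quot(B) → Quot(A) between the total quotient rings is an isomorphism. -/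
lemma stmt6_nzd_iff {R : Type*} [CommRing R] [IsReduced R] {x : R} :
    x ∈ nonZeroDivisors R ↔ ∀ Q ∈ minimalPrimes R, x ∉ Q := by
  constructor
  · intro hx Q hQ hxQ
    haveI : Q.IsPrime := hQ.1.1
    have h1 : algebraMap R (Localization Q.primeCompl) x ∈
        IsLocalRing.maximalIdeal (Localization Q.primeCompl) :=
      (IsLocalization.AtPrime.to_map_mem_maximal_iff _ Q x).mpr hxQ
    have h2 : IsNilpotent (algebraMap R (Localization Q.primeCompl) x) :=
      (haveI := Ring.KrullDimLE.of_isLocalization Q hQ (Localization Q.primeCompl); Ring.KrullDimLE.isNilpotent_iff_mem_maximalIdeal.mpr h1)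
    have h3 : algebraMap R (Localization Q.primeCompl) x = 0 := h2.eq_zero
    obtain ⟨m, hm⟩ := (IsLocalization.map_eq_zero_iff Q.primeCompl _ x).mp h3
    have hm0 : (m : R) = 0 := mem_nonZeroDivisors_iff_right.mp hx _ hm
    exact m.2 (hm0 ▸ Q.zero_mem)
  · intro h; rw [mem_nonZeroDivisors_iff_right]; intro z hz
    by_contra hz0
    have hz' : ¬ ∀ Q ∈ minimalPrimes R, z ∈ Q := by
      intro hallQ
      apply hz0
      have hmem : z ∈ sInf (minimalPrimes R) := Submodule.mem_sInf.mpr hallQ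
      rw [show minimalPrimes R = Ideal.minimalPrimes (⊥ : Ideal R) from rfl,
        Ideal.sInf_minimalPrimes] at hmem
      have : IsNilpotent z := by
        rwa [← mem_nilradical, nilradical, Submodule.zero_eq_bot]
      exact this.eq_zero
    push_neg at hz'
    obtain ⟨Q, hQ, hzQ⟩ := hz'
    haveI : Q.IsPrime := hQ.1.1
    rcases (Ideal.IsPrime.mem_or_mem ‹Q.IsPrime› (hz ▸ Q.zero_mem)) with h1 | h1
    · exact hzQ h1
    · exact h Q hQ h1

set_option maxHeartbeats 1000000 in
set_option synthInstance.maxHeartbeats 200000 in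
/-- Let `A` be a reduced commutative ring whose minimal primes are exactly the
pairwise distinct `p 1, …, p n`, and let `B` be a subring of `A` such that:
(1) for each `i`, the canonical embedding `qf(B/(p i ∩ B)) → qf(A/p i)` is
surjective (expressed below: every element of `qf(A/p i)` is a quotient
`b̄/s̄` with `b, s ∈ B`, `s ∉ p i`); (2) the contractions `p i ∩ B` are pairwise
incomparable; and (3) every minimal prime of `B` has the form `p i ∩ B`.
Then every non zero divisor of `B` is a non zero divisor of `A`, and the
induced canonical ring homomorphism `Quot(B) → Quot(A)` is an isomorphism. -/
theorem stmt_6 {A : Type*} [CommRing A] [IsReduced A] {n : ℕ} (p : Fin n → Ideal A)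
    (hinj : Function.Injective p)
    (hmin : ∀ i, p i ∈ minimalPrimes A)
    (hall : ∀ q ∈ minimalPrimes A, ∃ i, q = p i)
    (B : Subring A)
    (hfield : ∀ i, ∀ x : FractionRing (A ⧸ p i), ∃ b s : B, (s : A) ∉ p i ∧
        x * algebraMap (A ⧸ p i) (FractionRing (A ⧸ p i))
              (Ideal.Quotient.mk (p i) (s : A)) =
          algebraMap (A ⧸ p i) (FractionRing (A ⧸ p i))
              (Ideal.Quotient.mk (p i) (b : A)))
    (hBincomp : ∀ i j, i ≠ j → ¬ (p i).comap B.subtype ≤ (p j).comap B.subtype)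
    (hBall : ∀ Q ∈ minimalPrimes B, ∃ i, Q = (p i).comap B.subtype) :
    (∀ b : B, b ∈ nonZeroDivisors B → (b : A) ∈ nonZeroDivisors A) ∧
    ∃ f : Localization (nonZeroDivisors B) →+* Localization (nonZeroDivisors A),
      (∀ b : B, f (algebraMap B (Localization (nonZeroDivisors B)) b) =
          algebraMap A (Localization (nonZeroDivisors A)) (b : A)) ∧
      Function.Bijective f := by
  classical
  haveI hBred : IsReduced B := isReduced_of_injective B.subtype B.subtype_injective
  have hp : ∀ i, (p i).IsPrime := fun i => (hmin i).1.1
  have hpB : ∀ i, ((p i).comap B.subtype).IsPrime := fun i => by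
    haveI := hp i; exact Ideal.IsPrime.comap _
  -- the contractions are exactly the minimal primes of B
  have hBmin : ∀ i, (p i).comap B.subtype ∈ minimalPrimes B := by
    intro i
    haveI := hpB i
    obtain ⟨Q, hQ, hQle⟩ :=
      Ideal.exists_minimalPrimes_le (I := (⊥ : Ideal B)) (J := (p i).comap B.subtype) bot_le
    obtain ⟨j, rfl⟩ := hBall Q hQ
    rcases eq_or_ne j i with rfl | hne
    · exact hQ
    · exact absurd hQle (hBincomp j i hne)
  -- Part 1
  have part1 : ∀ b : B, b ∈ nonZeroDivisors B → (b : A) ∈ nonZeroDivisors A := by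
    intro b hb
    rw [stmt6_nzd_iff] at hb ⊢
    intro Q hQ hmem
    obtain ⟨i, rfl⟩ := hall Q hQ
    exact hb _ (hBmin i) hmem
  refine ⟨part1, ?_⟩
  -- Key lemma: every a ∈ A can be written as b/s with b, s ∈ B, s a nonzerodivisor of B
  have key : ∀ a : A, ∃ s b : B, s ∈ nonZeroDivisors B ∧ (s : A) * a = (b : A) := by
    intro a
    have step1 : ∀ i, ∃ b s : B, (s : A) ∉ p i ∧ (s : A) * a - (b : A) ∈ p i := by
      intro i
      haveI := hp i
      obtain ⟨b, s, hs, heq⟩ := hfield i (algebraMap (A ⧸ p i) (FractionRing (A ⧸ p i))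
        (Ideal.Quotient.mk (p i) a))
      refine ⟨b, s, hs, ?_⟩
      rw [← map_mul] at heq
      have h1 := IsFractionRing.injective (A ⧸ p i) (FractionRing (A ⧸ p i)) heq
      rw [← map_mul] at h1
      have h2 := Ideal.Quotient.eq.mp h1
      have : a * (s : A) - (b : A) ∈ p i := h2
      rwa [mul_comm] at this
    choose bb ss hss hseq using step1
    have step2 : ∀ i, ∃ e : B, ((e : A) ∉ p i) ∧ ∀ j, j ≠ i → (e : A) ∈ p j := by
      intro i
      have hc : ∀ j, j ≠ i → ∃ c : B, (c : A) ∈ p j ∧ (c : A) ∉ p i := by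
        intro j hj
        obtain ⟨c, hc1, hc2⟩ := SetLike.not_le_iff_exists.mp (hBincomp j i hj)
        exact ⟨c, hc1, hc2⟩
      choose c hc1 hc2 using hc
      set c' : Fin n → B := fun j => if h : j ≠ i then c j h else 1 with hc'
      refine ⟨∏ j ∈ Finset.univ.erase i, c' j, ?_, ?_⟩
      · intro hmem
        haveI := hp i
        have : ((∏ j ∈ Finset.univ.erase i, c' j : B) : A)
            = ∏ j ∈ Finset.univ.erase i, ((c' j : B) : A) := by
          exact map_prod B.subtype _ _
        rw [this] at hmem
        obtain ⟨j, hj, hjm⟩ := Ideal.IsPrime.prod_mem_iff.mp hmem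
        have hji : j ≠ i := (Finset.mem_erase.mp hj).1
        simp only [hc', dif_pos hji] at hjm
        exact hc2 j hji hjm
      · intro j hj
        haveI := hp j
        have : ((∏ k ∈ Finset.univ.erase i, c' k : B) : A)
            = ∏ k ∈ Finset.univ.erase i, ((c' k : B) : A) := map_prod B.subtype _ _
        rw [this]
        refine Ideal.IsPrime.prod_mem_iff.mpr ⟨j, Finset.mem_erase.mpr ⟨hj, Finset.mem_univ j⟩, ?_⟩
        simp only [hc', dif_pos hj]
        exact hc1 j hj
    choose e he1 he2 using step2
    refine ⟨∑ i, e i * ss i, ∑ i, e i * bb i, ?_, ?_⟩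
    · rw [stmt6_nzd_iff]
      intro Q hQ hmemQ
      obtain ⟨k, rfl⟩ := hBall Q hQ
      have hco : ((∑ i, e i * ss i : B) : A) ∈ p k := hmemQ
      have hcoe : ((∑ i, e i * ss i : B) : A) = ∑ i, ((e i * ss i : B) : A) :=
        map_sum B.subtype _ _
      rw [hcoe] at hco
      have hrest : ∑ i ∈ Finset.univ.erase k, ((e i * ss i : B) : A) ∈ p k := by
        refine Ideal.sum_mem _ fun i hi => ?_
        have hik : k ≠ i := fun h => (Finset.mem_erase.mp hi).1 h.symm
        have hmm : (e i : A) ∈ p k := he2 i k hik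
        have : ((e i * ss i : B) : A) = (e i : A) * (ss i : A) := rfl
        rw [this]
        exact Ideal.mul_mem_right _ _ hmm
      have hsum : ((e k * ss k : B) : A) + ∑ i ∈ Finset.univ.erase k, ((e i * ss i : B) : A)
          = ∑ i, ((e i * ss i : B) : A) := Finset.add_sum_erase _ (fun i => ((e i * ss i : B) : A)) (Finset.mem_univ k)
      have hk : ((e k * ss k : B) : A) ∈ p k := by
        have := (p k).sub_mem hco hrest
        rwa [← hsum, add_sub_cancel_right] at this
      haveI := hp k
      have : (e k : A) * (ss k : A) ∈ p k := by simpa using hk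
      rcases Ideal.IsPrime.mem_or_mem ‹(p k).IsPrime› this with h | h
      · exact he1 k h
      · exact hss k h
    · have hrw : ((∑ i, e i * ss i : B) : A) * a - ((∑ i, e i * bb i : B) : A)
          = ∑ i, (e i : A) * ((ss i : A) * a - (bb i : A)) := by
        have hcoe1 : ((∑ i, e i * ss i : B) : A) = ∑ i, ((e i * ss i : B) : A) :=
          map_sum B.subtype _ _
        have hcoe2 : ((∑ i, e i * bb i : B) : A) = ∑ i, ((e i * bb i : B) : A) :=
          map_sum B.subtype _ _
        rw [hcoe1, hcoe2, Finset.sum_mul, ← Finset.sum_sub_distrib]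
        refine Finset.sum_congr rfl fun i _ => ?_
        have h1 : ((e i * ss i : B) : A) = (e i : A) * (ss i : A) := rfl
        have h2 : ((e i * bb i : B) : A) = (e i : A) * (bb i : A) := rfl
        rw [h1, h2]
        ring
      have hzero : ∀ k, ((∑ i, e i * ss i : B) : A) * a - ((∑ i, e i * bb i : B) : A) ∈ p k := by
        intro k
        rw [hrw]
        refine Ideal.sum_mem _ fun i _ => ?_
        rcases eq_or_ne i k with rfl | hik
        · exact Ideal.mul_mem_left _ _ (hseq i)
        · exact Ideal.mul_mem_right _ _ (he2 i k (fun h => hik h.symm))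
      have hmem : ((∑ i, e i * ss i : B) : A) * a - ((∑ i, e i * bb i : B) : A)
          ∈ sInf (minimalPrimes A) := by
        refine Submodule.mem_sInf.mpr fun Q hQ => ?_
        obtain ⟨i, rfl⟩ := hall Q hQ
        exact hzero i
      rw [show minimalPrimes A = Ideal.minimalPrimes (⊥ : Ideal A) from rfl,
        Ideal.sInf_minimalPrimes] at hmem
      have hnil : IsNilpotent (((∑ i, e i * ss i : B) : A) * a - ((∑ i, e i * bb i : B) : A)) := by
        rwa [← mem_nilradical, nilradical, Submodule.zero_eq_bot]
      exact sub_eq_zero.mp hnil.eq_zero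
  -- Part 2 : construct the map
  set g : B →+* Localization (nonZeroDivisors A) :=
    (algebraMap A (Localization (nonZeroDivisors A))).comp B.subtype with hg
  have hunits : ∀ s : nonZeroDivisors B, IsUnit (g s) := fun s =>
    IsLocalization.map_units (Localization (nonZeroDivisors A))
      (⟨((s : B) : A), part1 _ s.2⟩ : nonZeroDivisors A)
  refine ⟨IsLocalization.lift hunits, fun b => IsLocalization.lift_eq hunits b, ?_, ?_⟩
  · -- injective
    rw [injective_iff_map_eq_zero]
    intro x hx
    obtain ⟨⟨b, s⟩, rfl⟩ := IsLocalization.mk'_surjective (nonZeroDivisors B) x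
    have hx' : g b = g s * 0 := (IsLocalization.lift_mk'_spec _ _ _ _).mp hx
    rw [mul_zero] at hx'
    have hb : (b : A) = 0 := by
      obtain ⟨m, hm⟩ := (IsLocalization.map_eq_zero_iff (nonZeroDivisors A) _ _).mp hx'
      have : (m : A) * (b : A) = 0 := hm
      exact mem_nonZeroDivisors_iff_right.mp m.2 _ (by rwa [mul_comm] at this)
    have hb0 : b = 0 := Subtype.ext hb
    rw [hb0]; exact IsLocalization.mk'_zero _
  · intro y
    obtain ⟨⟨a, t⟩, rfl⟩ := IsLocalization.mk'_surjective (nonZeroDivisors A) y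
    obtain ⟨s1, b1, hs1, heq1⟩ := key a
    obtain ⟨s2, b2, hs2, heq2⟩ := key (t : A)
    have hb2A : (b2 : A) ∈ nonZeroDivisors A := by
      rw [← heq2]; exact mul_mem (part1 s2 hs2) t.2
    have hb2 : b2 ∈ nonZeroDivisors B := by
      rw [mem_nonZeroDivisors_iff_right]
      intro z hz
      have hzA : (z : A) * (b2 : A) = 0 := by
        have h0 : ((z * b2 : B) : A) = 0 := by rw [hz]; rfl
        simpa using h0
      exact Subtype.ext (mem_nonZeroDivisors_iff_right.mp hb2A _ hzA)
    have hm : s1 * b2 ∈ nonZeroDivisors B := mul_mem hs1 hb2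
    refine ⟨IsLocalization.mk' _ (b1 * s2) (⟨s1 * b2, hm⟩ : nonZeroDivisors B),
      (IsLocalization.lift_mk'_spec _ _ _ _).mpr ?_⟩
    have e1 : g (b1 * s2) = algebraMap A (Localization (nonZeroDivisors A)) ((b1 : A) * (s2 : A)) :=
      rfl
    have e2 : g ((⟨s1 * b2, hm⟩ : nonZeroDivisors B) : B)
        = algebraMap A (Localization (nonZeroDivisors A)) ((s1 : A) * (b2 : A)) := rfl
    rw [e1, e2, ← heq1, ← heq2]
    have hms : algebraMap A (Localization (nonZeroDivisors A)) ((t : A))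
        * IsLocalization.mk' (Localization (nonZeroDivisors A)) a t
        = algebraMap A (Localization (nonZeroDivisors A)) a := IsLocalization.mk'_spec' _ a t
    calc algebraMap A (Localization (nonZeroDivisors A)) ((s1 : A) * a * (s2 : A))
        = algebraMap A (Localization (nonZeroDivisors A)) ((s1 : A) * (s2 : A))
            * algebraMap A (Localization (nonZeroDivisors A)) a := by
          rw [← map_mul]; congr 1; ring
      _ = algebraMap A (Localization (nonZeroDivisors A)) ((s1 : A) * (s2 : A))
            * (algebraMap A (Localization (nonZeroDivisors A)) ((t : A))
               * IsLocalization.mk' (Localization (nonZeroDivisors A)) a t) := by rw [hms]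
      _ = algebraMap A (Localization (nonZeroDivisors A)) ((s1 : A) * ((s2 : A) * (t : A)))
            * IsLocalization.mk' (Localization (nonZeroDivisors A)) a t := by
          rw [← mul_assoc, ← map_mul]; congr 2; ring
end
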